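/- Let a, b, c be complex numbers such that c is not a nonpositive integer and Re(c - a - b) > 0. Then the series Σ_{n=0}^∞ (a)_n (b)_n / ((c)_n · n!) converges and its sum equals Γ(c)·Γ(c-a-b) / (Γ(c-a)·Γ(c-b)), where Γ is the complex Gamma function. (Gauss's theorem: ₂F₁(a,b;c;1) = Γ(c)Γ(c-a-b)/(Γ(c-a)Γ(c-b)).) -/

import Mathlib

open Complex Filter Set MeasureTheory

namespace GaussHypAux
open Topology

noncomputable def P (x : ℂ) (n : ℕ) : ℂ := (ascPochhammer ℂ n).eval x

noncomputable def T (a b c : ℂ) (n : ℕ) : ℂ := P a n * P b n / (P c n * n.factorial)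

noncomputable def Q (x : ℝ) (n : ℕ) : ℝ := (ascPochhammer ℝ n).eval x

noncomputable def M₀ (a b : ℂ) : ℝ := (‖a‖ + 1) + (‖b‖ + 1) + 1

noncomputable def U (a b : ℂ) (n : ℕ) : ℝ :=
  Q (‖a‖ + 1) n * Q (‖b‖ + 1) n / (Q (M₀ a b) n * n.factorial)

lemma P_zero (x : ℂ) : P x 0 = 1 := by simp [P]

lemma P_succ (x : ℂ) (n : ℕ) : P x (n + 1) = P x n * (x + n) := by
  simp [P, ascPochhammer_succ_eval]

lemma P_eq_prod (x : ℂ) (n : ℕ) : P x n = ∏ j ∈ Finset.range n, (x + j) := by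
  induction n with
  | zero => simp [P_zero]
  | succ n ih => rw [P_succ, Finset.prod_range_succ, ih]

lemma P_ne_zero {x : ℂ} (hx : ∀ n : ℕ, x ≠ -(n : ℂ)) (n : ℕ) : P x n ≠ 0 := by
  rw [P_eq_prod]
  exact Finset.prod_ne_zero_iff.2 fun j _ => by
    intro hj; exact hx j (by linear_combination hj)

lemma T_zero (a b c : ℂ) : T a b c 0 = 1 := by simp [T, P_zero]

lemma P_shift (c : ℂ) (n : ℕ) : P (c + 1) n * c = P c n * (c + n) := by
  induction n with
  | zero => simp [P_zero]
  | succ n ih =>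
    rw [P_succ, P_succ]
    push_cast
    ring_nf
    ring_nf at ih
    linear_combination (c + 1 + n) * ih

lemma hc_add {c : ℂ} (hc : ∀ n : ℕ, c ≠ -(n : ℂ)) (m : ℕ) :
    ∀ n : ℕ, c + m ≠ -(n : ℂ) := by
  intro n h
  exact hc (n + m) (by push_cast; linear_combination h)

lemma hc_one {c : ℂ} (hc : ∀ n : ℕ, c ≠ -(n : ℂ)) :
    ∀ n : ℕ, c + 1 ≠ -(n : ℂ) := by
  have := hc_add hc 1; simpa using this

lemma c_add_nat_ne {c : ℂ} (hc : ∀ n : ℕ, c ≠ -(n : ℂ)) (k : ℕ) : c + k ≠ 0 := by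
  intro h; exact hc k (by linear_combination h)

/-- Key telescoping identity. -/
lemma key {a b c : ℂ} (hc : ∀ n : ℕ, c ≠ -(n : ℂ)) (k : ℕ) :
    c * (c - a - b) * T a b c k - (c - a) * (c - b) * T a b (c + 1) k =
      (k : ℂ) * (k + c) * T a b (c + 1) k -
        ((k : ℂ) + 1) * ((k + 1 : ℕ) + c) * T a b (c + 1) (k + 1) := by
  have hc0 : c ≠ 0 := by simpa using hc 0
  have hck : c + (k : ℂ) ≠ 0 := c_add_nat_ne hc k
  have hck1 : c + 1 + (k : ℂ) ≠ 0 := by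
    have := c_add_nat_ne hc (k + 1); push_cast at this
    intro hh; exact this (by linear_combination hh)
  have hC : P c k ≠ 0 := P_ne_zero hc k
  have hF : ((k.factorial : ℂ)) ≠ 0 := by exact_mod_cast Nat.factorial_ne_zero k
  have hk1 : ((k : ℂ) + 1) ≠ 0 := Nat.cast_add_one_ne_zero k
  have hP1 : P (c + 1) k = P c k * (c + k) / c := by
    rw [eq_div_iff hc0]; exact P_shift c k
  have e2 : T a b (c + 1) k = P a k * P b k * c / (P c k * (c + k) * k.factorial) := by
    rw [T, hP1]; field_simp
  have e3 : T a b (c + 1) (k + 1) =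
      P a k * P b k * ((a + k) * (b + k)) * c /
        (P c k * (c + k) * (c + 1 + k) * (k.factorial * ((k : ℂ) + 1))) := by
    rw [T, P_succ, P_succ, P_succ, hP1]
    have hFs : (((k + 1).factorial : ℕ) : ℂ) = (k.factorial : ℂ) * ((k : ℂ) + 1) := by
      rw [Nat.factorial_succ]; push_cast; ring
    rw [hFs]
    field_simp
  push_cast at e3 ⊢
  set A := P a k; set B := P b k; set C := P c k; set F := (k.factorial : ℂ)
  set K := (k : ℂ)
  have hD1 : C * F ≠ 0 := mul_ne_zero hC hF
  have hD2 : C * (c + K) * F ≠ 0 := mul_ne_zero (mul_ne_zero hC hck) hF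
  have hD3 : C * (c + K) * (c + 1 + K) * (F * (K + 1)) ≠ 0 :=
    mul_ne_zero (mul_ne_zero (mul_ne_zero hC hck) hck1) (mul_ne_zero hF hk1)
  calc c * (c - a - b) * T a b c k - (c - a) * (c - b) * T a b (c + 1) k
      = (c * (c - a - b) * (A * B)) / (C * F)
          - ((c - a) * (c - b) * (A * B * c)) / (C * (c + K) * F) := by
        rw [e2]; simp only [T]; ring
    _ = (K * (K + c) * (A * B * c)) / (C * (c + K) * F)
          - ((K + 1) * (K + 1 + c) * (A * B * ((a + K) * (b + K)) * c)) /
              (C * (c + K) * (c + 1 + K) * (F * (K + 1))) := by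
        rw [div_sub_div _ _ hD1 hD2, div_sub_div _ _ hD2 hD3,
          div_eq_div_iff (mul_ne_zero hD1 hD2) (mul_ne_zero hD2 hD3)]
        ring
    _ = K * (K + c) * T a b (c + 1) k - (K + 1) * (K + 1 + c) * T a b (c + 1) (k + 1) := by
        rw [e2, e3]; ring

lemma gsp {s : ℂ} (hs : ∀ n : ℕ, s ≠ -(n : ℂ)) (k : ℕ) :
    Complex.GammaSeq s k * (P s k * (s + k)) = (k : ℂ) ^ s * k.factorial := by
  have : P s (k + 1) = ∏ j ∈ Finset.range (k + 1), (s + j) := P_eq_prod s (k + 1)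
  rw [← P_succ] at *
  rw [Complex.GammaSeq, ← this, div_mul_cancel₀ _ (P_ne_zero hs (k + 1))]

lemma GS_ne_zero {s : ℂ} (hs : ∀ n : ℕ, s ≠ -(n : ℂ)) {k : ℕ} (hk : 1 ≤ k) :
    Complex.GammaSeq s k ≠ 0 := by
  have hk0 : (k : ℂ) ≠ 0 := Nat.cast_ne_zero.2 (by omega)
  rw [Complex.GammaSeq]
  apply div_ne_zero
  · exact mul_ne_zero (by simp [cpow_eq_zero_iff, hk0])
      (Nat.cast_ne_zero.2 (Nat.factorial_ne_zero k))
  · rw [← P_eq_prod]; exact P_ne_zero hs (k + 1)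

/-- The crucial representation of the term via Gamma sequences. -/
lemma T_eq {a b c : ℂ} (ha : ∀ n : ℕ, a ≠ -(n : ℂ)) (hb : ∀ n : ℕ, b ≠ -(n : ℂ))
    (hc : ∀ n : ℕ, c ≠ -(n : ℂ)) {k : ℕ} (hk : 1 ≤ k) :
    T a b c k * (k : ℂ) ^ (c + 1 - a - b) =
      Complex.GammaSeq c k * ((k : ℂ) * (c + k)) /
        (Complex.GammaSeq a k * Complex.GammaSeq b k * ((a + k) * (b + k))) := by
  have hK0 : (k : ℂ) ≠ 0 := Nat.cast_ne_zero.2 (by omega)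
  have hGa := GS_ne_zero ha hk
  have hGb := GS_ne_zero hb hk
  have hF : ((k.factorial : ℂ)) ≠ 0 := Nat.cast_ne_zero.2 (Nat.factorial_ne_zero k)
  have hak : a + (k : ℂ) ≠ 0 := c_add_nat_ne ha k
  have hbk : b + (k : ℂ) ≠ 0 := c_add_nat_ne hb k
  have e_a := gsp ha k
  have e_b := gsp hb k
  have e_c := gsp hc k
  have key_pow : (k : ℂ) ^ a * (k : ℂ) ^ b * (k : ℂ) ^ (c + 1 - a - b)
      = (k : ℂ) ^ c * (k : ℂ) := by
    rw [← cpow_add _ _ hK0, ← cpow_add _ _ hK0]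
    have : a + b + (c + 1 - a - b) = c + 1 := by ring
    rw [this, cpow_add _ _ hK0, cpow_one]
  have hd1 : P c k * (k.factorial : ℂ) ≠ 0 := mul_ne_zero (P_ne_zero hc k) hF
  have hd2 : Complex.GammaSeq a k * Complex.GammaSeq b k * ((a + k) * (b + k)) ≠ 0 :=
    mul_ne_zero (mul_ne_zero hGa hGb) (mul_ne_zero hak hbk)
  simp only [T]
  rw [div_mul_eq_mul_div, div_eq_div_iff hd1 hd2]
  linear_combination ((k : ℂ) ^ (c + 1 - a - b) * Complex.GammaSeq b k * (P b k * (b + k))) * e_a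
    + ((k : ℂ) ^ (c + 1 - a - b) * (k : ℂ) ^ a * (k.factorial : ℂ)) * e_b
    + ((k.factorial : ℂ))^2 * key_pow - ((k : ℂ) * (k.factorial : ℂ)) * e_c

lemma tendsto_natCast_inv_complex :
    Tendsto (fun k : ℕ => ((k : ℂ))⁻¹) atTop (𝓝 0) := by
  rw [tendsto_zero_iff_norm_tendsto_zero]
  simpa using tendsto_inv_atTop_nhds_zero_nat

lemma tendsto_ratio (a b c : ℂ) (ha : ∀ n : ℕ, a ≠ -(n : ℂ)) (hb : ∀ n : ℕ, b ≠ -(n : ℂ)) :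
    Tendsto (fun k : ℕ => ((k : ℂ) * (c + k)) / ((a + k) * (b + k))) atTop (𝓝 1) := by
  have h0 : ∀ x : ℂ, Tendsto (fun k : ℕ => 1 + x * ((k : ℂ))⁻¹) atTop (𝓝 1) := by
    intro x
    have := (tendsto_natCast_inv_complex.const_mul x).const_add 1
    simpa using this
  have main : Tendsto (fun k : ℕ => (1 + c * ((k : ℂ))⁻¹) /
      ((1 + a * ((k : ℂ))⁻¹) * (1 + b * ((k : ℂ))⁻¹))) atTop (𝓝 1) := by
    have := (h0 c).div ((h0 a).mul (h0 b)) (by norm_num)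
    rw [mul_one, div_one] at this; exact this
  apply main.congr'
  filter_upwards [eventually_ge_atTop 1] with k hk
  have hK0 : (k : ℂ) ≠ 0 := Nat.cast_ne_zero.2 (by omega)
  have hak : a + (k : ℂ) ≠ 0 := c_add_nat_ne ha k
  have hbk : b + (k : ℂ) ≠ 0 := c_add_nat_ne hb k
  rw [div_eq_div_iff (mul_ne_zero (by
    intro hh; apply hak; field_simp at hh; linear_combination hh) (by
    intro hh; apply hbk; field_simp at hh; linear_combination hh)) (mul_ne_zero hak hbk)]
  field_simp
  ring

lemma tendsto_T_cpow {a b c : ℂ} (ha : ∀ n : ℕ, a ≠ -(n : ℂ)) (hb : ∀ n : ℕ, b ≠ -(n : ℂ))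
    (hc : ∀ n : ℕ, c ≠ -(n : ℂ)) :
    Tendsto (fun k : ℕ => T a b c k * (k : ℂ) ^ (c + 1 - a - b)) atTop
      (𝓝 (Complex.Gamma c / (Complex.Gamma a * Complex.Gamma b))) := by
  have hGa : Complex.Gamma a ≠ 0 := Complex.Gamma_ne_zero ha
  have hGb : Complex.Gamma b ≠ 0 := Complex.Gamma_ne_zero hb
  have l1 : Tendsto (fun k : ℕ => Complex.GammaSeq c k /
      (Complex.GammaSeq a k * Complex.GammaSeq b k)) atTop
      (𝓝 (Complex.Gamma c / (Complex.Gamma a * Complex.Gamma b))) :=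
    (Complex.GammaSeq_tendsto_Gamma c).div
      ((Complex.GammaSeq_tendsto_Gamma a).mul (Complex.GammaSeq_tendsto_Gamma b))
      (mul_ne_zero hGa hGb)
  have l2 := l1.mul (tendsto_ratio a b c ha hb)
  rw [mul_one] at l2
  apply l2.congr'
  filter_upwards [eventually_ge_atTop 1] with k hk
  rw [div_mul_div_comm, ← T_eq ha hb hc hk]

lemma T_zero_of_int {a : ℂ} {m : ℕ} (hma : a = -(m : ℂ)) (b c : ℂ) {k : ℕ} (hk : m < k) :
    T a b c k = 0 := by
  have : P a k = 0 := by
    rw [P_eq_prod]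
    exact Finset.prod_eq_zero (Finset.mem_range.2 hk) (by rw [hma]; ring)
  simp [T, this]

/-- Norm bound from the asymptotics. -/
lemma norm_T_le {a b c : ℂ} (ha : ∀ n : ℕ, a ≠ -(n : ℂ)) (hb : ∀ n : ℕ, b ≠ -(n : ℂ))
    (hc : ∀ n : ℕ, c ≠ -(n : ℂ)) :
    ∃ M : ℝ, ∀ᶠ k : ℕ in atTop, ‖T a b c k‖ ≤ M * (k : ℝ) ^ ((a + b - c).re - 1) := by
  set L := Complex.Gamma c / (Complex.Gamma a * Complex.Gamma b)
  refine ⟨‖L‖ + 1, ?_⟩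
  have hbd : ∀ᶠ k : ℕ in atTop, ‖T a b c k * (k : ℂ) ^ (c + 1 - a - b)‖ < ‖L‖ + 1 :=
    (tendsto_T_cpow ha hb hc).norm.eventually_lt_const (by linarith [norm_nonneg L])
  filter_upwards [hbd, eventually_ge_atTop 1] with k hk hk1
  have hkpos : (0 : ℝ) < (k : ℝ) := by exact_mod_cast Nat.lt_of_lt_of_le Nat.zero_lt_one hk1
  have hnorm : ‖((k : ℂ)) ^ (c + 1 - a - b)‖ = (k : ℝ) ^ ((c + 1 - a - b).re) := by
    rw [show ((k : ℂ)) = ((k : ℝ) : ℂ) by push_cast; rfl]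
    exact Complex.norm_cpow_eq_rpow_re_of_pos hkpos _
  have hne : ((k : ℝ)) ^ ((c + 1 - a - b).re) ≠ 0 := by positivity
  rw [norm_mul, hnorm] at hk
  have : ‖T a b c k‖ ≤ (‖L‖ + 1) / (k : ℝ) ^ ((c + 1 - a - b).re) := by
    rw [le_div_iff₀ (lt_of_le_of_ne (by positivity) (Ne.symm hne))]
    exact hk.le
  refine this.trans (le_of_eq ?_)
  rw [div_eq_mul_inv, ← Real.rpow_neg hkpos.le]
  congr 1
  have : (c + 1 - a - b).re = c.re + 1 - a.re - b.re := by simp [Complex.add_re, Complex.sub_re]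
  rw [this]
  have : (a + b - c).re = a.re + b.re - c.re := by simp [Complex.add_re, Complex.sub_re]
  rw [this]
  ring

lemma summable_T {a b c : ℂ} (hc : ∀ n : ℕ, c ≠ -(n : ℂ)) (h : 0 < (c - a - b).re) :
    Summable (T a b c) := by
  by_cases ha : ∃ m : ℕ, a = -(m : ℂ)
  · obtain ⟨m, hm⟩ := ha
    apply summable_of_ne_finset_zero (s := Finset.range (m + 1))
    intro k hk
    exact T_zero_of_int hm b c (by simpa [Nat.lt_succ_iff] using Finset.mem_range.not.1 hk)
  by_cases hb : ∃ m : ℕ, b = -(m : ℂ)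
  · obtain ⟨m, hm⟩ := hb
    apply summable_of_ne_finset_zero (s := Finset.range (m + 1))
    intro k hk
    have hz : P b k = 0 := by
      rw [P_eq_prod]
      exact Finset.prod_eq_zero
        (Finset.mem_range.2 (show m < k by have := Finset.mem_range.not.1 hk; omega)) (by rw [hm]; ring)
    simp [T, hz]
  push_neg at ha hb
  obtain ⟨M, hM⟩ := norm_T_le ha hb hc
  have hsum : Summable (fun k : ℕ => M * (k : ℝ) ^ ((a + b - c).re - 1)) := by
    apply Summable.mul_left
    rw [Real.summable_nat_rpow]
    have : (c - a - b).re = c.re - a.re - b.re := by simp [Complex.sub_re]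
    have h2 : (a + b - c).re = a.re + b.re - c.re := by simp [Complex.add_re, Complex.sub_re]
    rw [h2]; rw [this] at h; linarith
  exact Summable.of_norm_bounded_eventually hsum (by rwa [Nat.cofinite_eq_atTop])

lemma boundary {a b c : ℂ} (hc : ∀ n : ℕ, c ≠ -(n : ℂ)) (h : 0 < (c - a - b).re) :
    Tendsto (fun n : ℕ => (n : ℂ) * ((n : ℂ) + c) * T a b (c + 1) n) atTop (𝓝 0) := by
  by_cases ha : ∃ m : ℕ, a = -(m : ℂ)
  · obtain ⟨m, hm⟩ := ha
    apply tendsto_const_nhds.congr'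
    filter_upwards [eventually_gt_atTop m] with k hk
    rw [T_zero_of_int hm b (c + 1) hk, mul_zero]
  by_cases hb : ∃ m : ℕ, b = -(m : ℂ)
  · obtain ⟨m, hm⟩ := hb
    apply tendsto_const_nhds.congr'
    filter_upwards [eventually_gt_atTop m] with k hk
    have hz : P b k = 0 := by
      rw [P_eq_prod]
      exact Finset.prod_eq_zero (Finset.mem_range.2 hk) (by rw [hm]; ring)
    simp [T, hz]
  push_neg at ha hb
  set w : ℂ := c + 1 + 1 - a - b with hw
  set L : ℂ := Complex.Gamma (c + 1) / (Complex.Gamma a * Complex.Gamma b)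
  have l1 : Tendsto (fun k : ℕ => T a b (c + 1) k * (k : ℂ) ^ w) atTop (𝓝 L) :=
    tendsto_T_cpow ha hb (hc_one hc)
  have l2 : Tendsto (fun n : ℕ => (n : ℂ) * ((n : ℂ) + c) * ((n : ℂ)) ^ (-w)) atTop (𝓝 0) := by
    have hδ : (0 : ℝ) < (c - a - b).re := h
    have hg : Tendsto (fun n : ℕ => 2 * (n : ℝ) ^ (-(c - a - b).re)) atTop (𝓝 0) := by
      have := (tendsto_rpow_neg_atTop hδ).comp tendsto_natCast_atTop_atTop (α := ℕ)
      simpa using this.const_mul 2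
    apply squeeze_zero_norm' _ hg
    filter_upwards [eventually_ge_atTop 1, eventually_ge_atTop ⌈‖c‖⌉₊] with n h1 h2
    have hnpos : (0 : ℝ) < (n : ℝ) := by exact_mod_cast Nat.lt_of_lt_of_le Nat.zero_lt_one h1
    have hcn : ‖c‖ ≤ (n : ℝ) := (Nat.le_ceil _).trans (by exact_mod_cast h2)
    have e1 : ‖((n : ℂ)) ^ (-w)‖ = (n : ℝ) ^ ((-w).re) := by
      rw [show ((n : ℂ)) = (((n : ℝ)) : ℂ) by push_cast; rfl]
      exact Complex.norm_cpow_eq_rpow_re_of_pos hnpos _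
    rw [norm_mul, norm_mul, e1, Complex.norm_natCast]
    have e2 : ‖(n : ℂ) + c‖ ≤ 2 * (n : ℝ) := by
      calc ‖(n : ℂ) + c‖ ≤ ‖(n : ℂ)‖ + ‖c‖ := norm_add_le _ _
        _ ≤ (n : ℝ) + (n : ℝ) := by rw [Complex.norm_natCast]; linarith
        _ = 2 * (n : ℝ) := by ring
    have e3 : (n : ℝ) * (2 * (n : ℝ)) * (n : ℝ) ^ ((-w).re) = 2 * (n : ℝ) ^ (-(c - a - b).re) := by
      have hre : (-w).re = -(c.re + 2 - a.re - b.re) := by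
        simp [hw, Complex.add_re, Complex.sub_re, Complex.one_re]; ring
      have hre2 : -(c - a - b).re = 2 + -(c.re + 2 - a.re - b.re) := by
        simp [Complex.sub_re]; ring
      rw [hre, hre2, Real.rpow_add hnpos,
        show (2 : ℝ) = ((2 : ℕ) : ℝ) by norm_num, Real.rpow_natCast]
      ring
    calc (n : ℝ) * ‖(n : ℂ) + c‖ * (n : ℝ) ^ ((-w).re)
        ≤ (n : ℝ) * (2 * (n : ℝ)) * (n : ℝ) ^ ((-w).re) := by
          have hp : (0 : ℝ) ≤ (n : ℝ) ^ ((-w).re) := Real.rpow_nonneg hnpos.le _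
          exact mul_le_mul_of_nonneg_right (mul_le_mul_of_nonneg_left e2 hnpos.le) hp
      _ = 2 * (n : ℝ) ^ (-(c - a - b).re) := e3
  have lmul := l1.mul l2
  rw [mul_zero] at lmul
  apply lmul.congr'
  filter_upwards [eventually_ge_atTop 1] with n h1
  have hn0 : (n : ℂ) ≠ 0 := Nat.cast_ne_zero.2 (by omega)
  have : ((n : ℂ)) ^ w * ((n : ℂ)) ^ (-w) = 1 := by
    rw [← cpow_add _ _ hn0, add_neg_cancel, cpow_zero]
  calc T a b (c + 1) n * (n : ℂ) ^ w * ((n : ℂ) * ((n : ℂ) + c) * ((n : ℂ)) ^ (-w))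
      = (n : ℂ) * ((n : ℂ) + c) * T a b (c + 1) n * ((n : ℂ) ^ w * ((n : ℂ)) ^ (-w)) := by ring
    _ = (n : ℂ) * ((n : ℂ) + c) * T a b (c + 1) n := by rw [this, mul_one]

lemma contig {a b c : ℂ} (hc : ∀ n : ℕ, c ≠ -(n : ℂ)) (h : 0 < (c - a - b).re) :
    c * (c - a - b) * ∑' k, T a b c k = (c - a) * (c - b) * ∑' k, T a b (c + 1) k := by
  have hs1 := summable_T hc h
  have h1 : 0 < (c + 1 - a - b).re := by
    have : (c + 1 - a - b).re = (c - a - b).re + 1 := by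
      simp [Complex.add_re, Complex.sub_re, Complex.one_re]; ring
    rw [this]; linarith
  have hs2 : Summable (T a b (c + 1)) := summable_T (hc_one hc) h1
  set f : ℕ → ℂ := fun n => (n : ℂ) * ((n : ℂ) + c) * T a b (c + 1) n with hf
  have t1 : Tendsto (fun n => ∑ k ∈ Finset.range n,
      (c * (c - a - b) * T a b c k - (c - a) * (c - b) * T a b (c + 1) k)) atTop
      (𝓝 (c * (c - a - b) * ∑' k, T a b c k - (c - a) * (c - b) * ∑' k, T a b (c + 1) k)) :=
    ((hs1.hasSum.mul_left _).sub (hs2.hasSum.mul_left _)).tendsto_sum_nat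
  have t2 : ∀ n : ℕ, (∑ k ∈ Finset.range n,
      (c * (c - a - b) * T a b c k - (c - a) * (c - b) * T a b (c + 1) k)) = f 0 - f n := by
    intro n
    rw [← Finset.sum_range_sub' f n]
    apply Finset.sum_congr rfl
    intro k _
    rw [key hc k]
    simp only [hf]
    push_cast
    ring
  have hf0 : f 0 = 0 := by simp [hf]
  have t3 : Tendsto (fun n => f 0 - f n) atTop (𝓝 0) := by
    have := (boundary hc h).const_sub (f 0)
    simpa [hf0] using this
  rw [funext t2] at t1
  have := tendsto_nhds_unique t1 t3
  linear_combination this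

lemma re_shift (c a b : ℂ) (m : ℕ) : (c + m - a - b).re = (c - a - b).re + m := by
  simp [Complex.add_re, Complex.sub_re, Complex.natCast_re]; ring

/-- Iterated contiguous relation. -/
lemma iterate_contig {a b c : ℂ} (hc : ∀ n : ℕ, c ≠ -(n : ℂ)) (h : 0 < (c - a - b).re)
    (m : ℕ) :
    (∑' k, T a b c k) * (P c m * P (c - a - b) m) =
      (∑' k, T a b (c + m) k) * (P (c - a) m * P (c - b) m) := by
  induction m with
  | zero => simp [P_zero]
  | succ m ih =>
    have hcm : ∀ n : ℕ, c + m ≠ -(n : ℂ) := hc_add hc m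
    have hm : 0 < (c + m - a - b).re := by rw [re_shift]; positivity
    have hco := contig hcm (by
      have : (c + m - a - b) = ((c + m) - a - b) := by ring
      rwa [← this])
    rw [P_succ, P_succ, P_succ, P_succ]
    push_cast at hco ⊢
    rw [show c + ((m : ℂ) + 1) = c + (m : ℂ) + 1 from by ring]
    linear_combination ((c + m) * (c + m - a - b)) * ih + (P (c - a) m * P (c - b) m) * hco

lemma Q_zero (x : ℝ) : Q x 0 = 1 := by simp [Q]

lemma Q_succ (x : ℝ) (n : ℕ) : Q x (n + 1) = Q x n * (x + n) := by
  simp [Q, ascPochhammer_succ_eval]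

lemma Q_pos {x : ℝ} (hx : 0 < x) (n : ℕ) : 0 < Q x n := by
  induction n with
  | zero => simp [Q_zero]
  | succ n ih => rw [Q_succ]; positivity

lemma P_ofReal (x : ℝ) (n : ℕ) : P ((x : ℝ) : ℂ) n = ((Q x n : ℝ) : ℂ) := by
  induction n with
  | zero => simp [P_zero, Q_zero]
  | succ n ih => rw [P_succ, Q_succ, ih]; push_cast; ring

lemma norm_P_le (x : ℂ) (n : ℕ) : ‖P x n‖ ≤ Q (‖x‖ + 1) n := by
  induction n with
  | zero => simp [P_zero, Q_zero]
  | succ n ih =>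
    rw [P_succ, Q_succ, norm_mul]
    have h1 : ‖x + (n : ℂ)‖ ≤ ‖x‖ + 1 + n := by
      calc ‖x + (n : ℂ)‖ ≤ ‖x‖ + ‖(n : ℂ)‖ := norm_add_le _ _
        _ = ‖x‖ + n := by rw [Complex.norm_natCast]
        _ ≤ ‖x‖ + 1 + n := by linarith
    exact mul_le_mul ih h1 (norm_nonneg _) (le_of_lt (Q_pos (by positivity) n))

lemma Q_nonneg {x : ℝ} (hx : 0 ≤ x) (n : ℕ) : 0 ≤ Q x n := by
  induction n with
  | zero => simp [Q_zero]
  | succ n ih => rw [Q_succ]; exact mul_nonneg ih (by positivity)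

lemma P_lower {c : ℂ} {m : ℕ} (hm : ‖c‖ ≤ (m : ℝ)) (n : ℕ) :
    Q ((m : ℝ) - ‖c‖) n ≤ ‖P (c + m) n‖ := by
  have hm0 : (0 : ℝ) ≤ (m : ℝ) - ‖c‖ := by linarith
  induction n with
  | zero => simp [P_zero, Q_zero]
  | succ n ih =>
    rw [P_succ, Q_succ, norm_mul]
    have h1 : (m : ℝ) - ‖c‖ + n ≤ ‖c + m + (n : ℂ)‖ := by
      have hz : ‖(m : ℂ) + (n : ℂ)‖ ≤ ‖c + ((m : ℂ) + (n : ℂ))‖ + ‖c‖ := by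
        simpa using norm_sub_le (c + ((m : ℂ) + (n : ℂ))) c
      have hmn : ‖((m : ℂ)) + (n : ℂ)‖ = (m : ℝ) + n := by
        rw [show ((m : ℂ)) + (n : ℂ) = (((m + n : ℕ) : ℂ)) by push_cast; ring,
          Complex.norm_natCast]
        push_cast; ring
      have he : c + (m : ℂ) + (n : ℂ) = c + ((m : ℂ) + (n : ℂ)) := by ring
      rw [he]
      linarith
    calc Q ((m : ℝ) - ‖c‖) n * ((m : ℝ) - ‖c‖ + n)
        ≤ ‖P (c + m) n‖ * ((m : ℝ) - ‖c‖ + n) := by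
          apply mul_le_mul_of_nonneg_right ih
          positivity
      _ ≤ ‖P (c + m) n‖ * ‖c + m + (n : ℂ)‖ :=
          mul_le_mul_of_nonneg_left h1 (norm_nonneg _)

lemma Q_ratio {M x : ℝ} (hM : 0 < M) (hx : M ≤ x) (n : ℕ) (hn : 1 ≤ n) :
    (x / M) * Q M n ≤ Q x n := by
  induction n with
  | zero => omega
  | succ n ih =>
    rcases Nat.eq_or_lt_of_le hn with he | hl
    · have hn0 : n = 0 := by omega
      subst hn0
      rw [Q_succ, Q_succ, Q_zero]
      push_cast [Nat.cast_zero]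
      have h1 : x / M * (1 * (M + 0)) = x := by field_simp; ring
      rw [h1]
      have := Q_nonneg (le_of_lt (lt_of_lt_of_le hM hx)) 0
      nlinarith [Q_zero x]
    · have hn1 : 1 ≤ n := by omega
      rw [Q_succ, Q_succ, ← mul_assoc]
      have h2 : (0 : ℝ) ≤ M + n := by positivity
      calc x / M * Q M n * (M + n) ≤ Q x n * (M + n) :=
            mul_le_mul_of_nonneg_right (ih hn1) h2
        _ ≤ Q x n * (x + n) := by
            apply mul_le_mul_of_nonneg_left (by linarith) (Q_nonneg (by linarith) n)

lemma ofReal_pos_ne {x : ℝ} (hx : 0 < x) : ∀ n : ℕ, ((x : ℝ) : ℂ) ≠ -(n : ℂ) := by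
  intro n hn
  rw [show -((n : ℕ) : ℂ) = (((-(n : ℝ)) : ℝ) : ℂ) by push_cast; ring] at hn
  have := Complex.ofReal_inj.1 hn
  have hn0 : (0 : ℝ) ≤ (n : ℝ) := Nat.cast_nonneg n
  linarith

lemma hM₀_pos (a b : ℂ) : 0 < M₀ a b := by
  have := norm_nonneg a; have := norm_nonneg b
  unfold M₀; linarith

lemma summable_U (a b : ℂ) : Summable (U a b) := by
  have ha' : (0 : ℝ) < ‖a‖ + 1 := by positivity
  have hb' : (0 : ℝ) < ‖b‖ + 1 := by positivity
  have hsc : Summable (T ((‖a‖ + 1 : ℝ) : ℂ) ((‖b‖ + 1 : ℝ) : ℂ) ((M₀ a b : ℝ) : ℂ)) := by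
    apply summable_T (ofReal_pos_ne (hM₀_pos a b))
    rw [show ((M₀ a b : ℝ) : ℂ) - ((‖a‖ + 1 : ℝ) : ℂ) - ((‖b‖ + 1 : ℝ) : ℂ)
      = (((1 : ℝ)) : ℂ) by unfold M₀; push_cast; ring]
    simp
  have heq : ∀ n, T ((‖a‖ + 1 : ℝ) : ℂ) ((‖b‖ + 1 : ℝ) : ℂ) ((M₀ a b : ℝ) : ℂ) n
      = ((U a b n : ℝ) : ℂ) := by
    intro n
    rw [T, P_ofReal, P_ofReal, P_ofReal, U]
    push_cast
    ring
  rw [← Complex.summable_ofReal]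
  exact hsc.congr heq

lemma U_nonneg (a b : ℂ) (n : ℕ) : 0 ≤ U a b n := by
  have ha' : (0 : ℝ) < ‖a‖ + 1 := by positivity
  have hb' : (0 : ℝ) < ‖b‖ + 1 := by positivity
  have := Q_pos ha' n; have := Q_pos hb' n; have := Q_pos (hM₀_pos a b) n
  have hf : (0:ℝ) < (n.factorial : ℝ) := by exact_mod_cast Nat.factorial_pos n
  unfold U; positivity

lemma norm_T_shift_le {a b c : ℂ} {m : ℕ} (hm : ‖c‖ + M₀ a b ≤ (m : ℝ)) {n : ℕ} (hn : 1 ≤ n) :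
    ‖T a b (c + m) n‖ ≤ (M₀ a b / ((m : ℝ) - ‖c‖)) * U a b n := by
  set M := M₀ a b
  have hM : 0 < M := hM₀_pos a b
  have hm' : M ≤ (m : ℝ) - ‖c‖ := by linarith
  have hm'pos : 0 < (m : ℝ) - ‖c‖ := by linarith
  have hmc : ‖c‖ ≤ (m : ℝ) := by linarith [hM]
  have hf : (0:ℝ) < (n.factorial : ℝ) := by exact_mod_cast Nat.factorial_pos n
  have hnum : ‖P a n * P b n‖ ≤ Q (‖a‖ + 1) n * Q (‖b‖ + 1) n := by
    rw [norm_mul]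
    exact mul_le_mul (norm_P_le a n) (norm_P_le b n) (norm_nonneg _)
      (Q_nonneg (by positivity) n)
  have hden : (((m : ℝ) - ‖c‖) / M) * Q M n * (n.factorial : ℝ)
      ≤ ‖P (c + m) n‖ * (n.factorial : ℝ) := by
    apply mul_le_mul_of_nonneg_right _ hf.le
    exact le_trans (Q_ratio hM hm' n hn) (P_lower hmc n)
  have hden_pos : 0 < (((m : ℝ) - ‖c‖) / M) * Q M n * (n.factorial : ℝ) := by
    have := Q_pos hM n; positivity
  have hTnorm : ‖T a b (c + m) n‖
      = ‖P a n * P b n‖ / (‖P (c + m) n‖ * (n.factorial : ℝ)) := by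
    rw [T, norm_div, norm_mul, norm_mul, Complex.norm_natCast]
  rw [hTnorm]
  calc ‖P a n * P b n‖ / (‖P (c + m) n‖ * (n.factorial : ℝ))
      ≤ (Q (‖a‖ + 1) n * Q (‖b‖ + 1) n) / ((((m : ℝ) - ‖c‖) / M) * Q M n * (n.factorial : ℝ)) :=
        div_le_div₀ (by
          have := Q_nonneg (show (0:ℝ) ≤ ‖a‖ + 1 by positivity) n
          have := Q_nonneg (show (0:ℝ) ≤ ‖b‖ + 1 by positivity) n
          positivity) hnum hden_pos hden
    _ = (M / ((m : ℝ) - ‖c‖)) * U a b n := by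
        rw [U]
        have h2 : Q (M₀ a b) n = Q M n := rfl
        rw [h2]
        have h1 : Q M n ≠ 0 := (Q_pos hM n).ne'
        field_simp

lemma tendsto_S_one {a b c : ℂ} (hc : ∀ n : ℕ, c ≠ -(n : ℂ)) (h : 0 < (c - a - b).re) :
    Tendsto (fun m : ℕ => ∑' k, T a b (c + m) k) atTop (𝓝 1) := by
  set M := M₀ a b with hMdef
  have hM : 0 < M := hM₀_pos a b
  have hU1 : Summable (fun k => U a b (k + 1)) := (summable_nat_add_iff 1).2 (summable_U a b)
  set K : ℝ := ∑' k, U a b (k + 1) with hK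
  have hKnn : 0 ≤ K := tsum_nonneg fun k => U_nonneg a b (k + 1)
  rw [show (1 : ℂ) = 1 + 0 by ring]
  have hgoal : Tendsto (fun m : ℕ => ∑' k, T a b (c + m) (k + 1)) atTop (𝓝 0) := by
    apply squeeze_zero_norm' (a := fun m : ℕ => (M / ((m : ℝ) - ‖c‖)) * K) ?_ ?_
    · filter_upwards [eventually_ge_atTop ⌈‖c‖ + M⌉₊] with m hm
      have hmR : ‖c‖ + M ≤ (m : ℝ) := (Nat.le_ceil _).trans (by exact_mod_cast hm)
      have hm'pos : 0 < (m : ℝ) - ‖c‖ := by linarith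
      have hsm : Summable (T a b (c + m)) := by
        apply summable_T (hc_add hc m)
        rw [show c + (m : ℂ) - a - b = c + m - a - b by ring, re_shift]
        positivity
      have hsn : Summable (fun k => ‖T a b (c + m) (k + 1)‖) := by
        apply Summable.norm
        exact (summable_nat_add_iff 1).2 hsm
      calc ‖∑' k, T a b (c + m) (k + 1)‖ ≤ ∑' k, ‖T a b (c + m) (k + 1)‖ :=
            norm_tsum_le_tsum_norm hsn
        _ ≤ ∑' k, (M / ((m : ℝ) - ‖c‖)) * U a b (k + 1) := by
            apply Summable.tsum_le_tsum _ hsn (hU1.mul_left _)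
            intro k
            exact norm_T_shift_le hmR (Nat.succ_le_succ (Nat.zero_le k))
        _ = (M / ((m : ℝ) - ‖c‖)) * K := tsum_mul_left
    · have hdiv : Tendsto (fun m : ℕ => (m : ℝ) - ‖c‖) atTop atTop :=
        tendsto_atTop_add_const_right _ _ tendsto_natCast_atTop_atTop
      have := (tendsto_const_nhds (x := M * K)).div_atTop hdiv
      apply this.congr
      intro m
      field_simp
  have hS : ∀ m : ℕ, ∑' k, T a b (c + m) k = 1 + ∑' k, T a b (c + m) (k + 1) := by
    intro m
    have hsm : Summable (T a b (c + m)) := by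
      apply summable_T (hc_add hc m)
      rw [show c + (m : ℂ) - a - b = c + m - a - b by ring, re_shift]
      positivity
    rw [Summable.tsum_eq_zero_add hsm, T_zero]
  rw [funext hS]
  exact tendsto_const_nhds.add hgoal

lemma tendsto_ratio2 (x y z w : ℂ) :
    Tendsto (fun m : ℕ => ((x + m) * (y + m)) / ((z + m) * (w + m))) atTop (𝓝 1) := by
  have h0 : ∀ u : ℂ, Tendsto (fun m : ℕ => 1 + u * ((m : ℂ))⁻¹) atTop (𝓝 1) := by
    intro u
    have := (tendsto_natCast_inv_complex.const_mul u).const_add 1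
    simpa using this
  have main : Tendsto (fun m : ℕ => ((1 + x * ((m : ℂ))⁻¹) * (1 + y * ((m : ℂ))⁻¹)) /
      ((1 + z * ((m : ℂ))⁻¹) * (1 + w * ((m : ℂ))⁻¹))) atTop (𝓝 1) := by
    have := ((h0 x).mul (h0 y)).div ((h0 z).mul (h0 w)) (by norm_num)
    rw [mul_one, div_one] at this; exact this
  apply main.congr'
  have hbig : ∀ u : ℂ, ∀ᶠ m : ℕ in atTop, u + (m : ℂ) ≠ 0 := by
    intro u
    filter_upwards [eventually_gt_atTop ⌈‖u‖⌉₊] with m hm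
    intro hcon
    have h1 : ‖u‖ < (m : ℝ) := lt_of_le_of_lt (Nat.le_ceil _) (by exact_mod_cast hm)
    have h2 : u = -(m : ℂ) := by linear_combination hcon
    have h3 : ‖u‖ = (m : ℝ) := by rw [h2, norm_neg, Complex.norm_natCast]
    linarith
  filter_upwards [eventually_ge_atTop 1, hbig x, hbig y, hbig z, hbig w]
    with m hm hx hy hz hw
  have hm0 : (m : ℂ) ≠ 0 := Nat.cast_ne_zero.2 (by omega)
  have d1 : (1 + z * ((m : ℂ))⁻¹) ≠ 0 := by
    intro hcon; apply hz
    have : z + (m : ℂ) = (1 + z * ((m : ℂ))⁻¹) * m := by field_simp; ring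
    rw [this, hcon, zero_mul]
  have d2 : (1 + w * ((m : ℂ))⁻¹) ≠ 0 := by
    intro hcon; apply hw
    have : w + (m : ℂ) = (1 + w * ((m : ℂ))⁻¹) * m := by field_simp; ring
    rw [this, hcon, zero_mul]
  rw [div_eq_div_iff (mul_ne_zero d1 d2) (mul_ne_zero hz hw)]
  field_simp
  ring

lemma tendsto_ratio_G {a b c : ℂ} (hc : ∀ n : ℕ, c ≠ -(n : ℂ))
    (hcab : ∀ n : ℕ, c - a - b ≠ -(n : ℂ))
    (hca : ∀ n : ℕ, c - a ≠ -(n : ℂ)) (hcb : ∀ n : ℕ, c - b ≠ -(n : ℂ)) :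
    Tendsto (fun m : ℕ => (P (c - a) m * P (c - b) m) / (P c m * P (c - a - b) m)) atTop
      (𝓝 (Complex.Gamma c * Complex.Gamma (c - a - b) /
        (Complex.Gamma (c - a) * Complex.Gamma (c - b)))) := by
  have hGa : Complex.Gamma (c - a) ≠ 0 := Complex.Gamma_ne_zero hca
  have hGb : Complex.Gamma (c - b) ≠ 0 := Complex.Gamma_ne_zero hcb
  have l1 : Tendsto (fun m : ℕ => Complex.GammaSeq c m * Complex.GammaSeq (c - a - b) m /
      (Complex.GammaSeq (c - a) m * Complex.GammaSeq (c - b) m)) atTop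
      (𝓝 (Complex.Gamma c * Complex.Gamma (c - a - b) /
        (Complex.Gamma (c - a) * Complex.Gamma (c - b)))) :=
    ((Complex.GammaSeq_tendsto_Gamma c).mul
      (Complex.GammaSeq_tendsto_Gamma (c - a - b))).div
      (((Complex.GammaSeq_tendsto_Gamma (c - a)).mul
        (Complex.GammaSeq_tendsto_Gamma (c - b)))) (mul_ne_zero hGa hGb)
  have l2 := l1.mul (tendsto_ratio2 c (c - a - b) (c - a) (c - b))
  rw [mul_one] at l2
  apply l2.congr'
  filter_upwards [eventually_ge_atTop 1] with m hm
  have hm0 : (m : ℂ) ≠ 0 := Nat.cast_ne_zero.2 (by omega)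
  have e_c := gsp hc m
  have e_cab := gsp hcab m
  have e_ca := gsp hca m
  have e_cb := gsp hcb m
  have hGSc := GS_ne_zero hc hm
  have hGScab := GS_ne_zero hcab hm
  have hGSca := GS_ne_zero hca hm
  have hGScb := GS_ne_zero hcb hm
  have hF : ((m.factorial : ℂ)) ≠ 0 := Nat.cast_ne_zero.2 (Nat.factorial_ne_zero m)
  have key_pow : (m : ℂ) ^ (c - a) * (m : ℂ) ^ (c - b)
      = (m : ℂ) ^ c * (m : ℂ) ^ (c - a - b) := by
    rw [← cpow_add _ _ hm0, ← cpow_add _ _ hm0]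
    congr 1
    ring
  have hD1 : Complex.GammaSeq (c - a) m * Complex.GammaSeq (c - b) m *
      ((c - a + m) * (c - b + m)) ≠ 0 :=
    mul_ne_zero (mul_ne_zero hGSca hGScb)
      (mul_ne_zero (c_add_nat_ne hca m) (c_add_nat_ne hcb m))
  have hD2 : P c m * P (c - a - b) m ≠ 0 :=
    mul_ne_zero (P_ne_zero hc m) (P_ne_zero hcab m)
  rw [div_mul_div_comm, div_eq_div_iff hD1 hD2]
  linear_combination - (Complex.GammaSeq (c - b) m * (P (c - b) m * (c - b + (m : ℂ)))) * e_ca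
    - ((m : ℂ) ^ (c - a) * (m.factorial : ℂ)) * e_cb
    - ((m.factorial : ℂ)) ^ 2 * key_pow
    + (Complex.GammaSeq (c - a - b) m * (P (c - a - b) m * (c - a - b + (m : ℂ)))) * e_c
    + ((m : ℂ) ^ c * (m.factorial : ℂ)) * e_cab

end GaussHypAux


/-- The `n`-th term of the Gauss hypergeometric series `₂F₁(a,b;c;z)`:
`(a)ₙ (b)ₙ / ((c)ₙ n!) · zⁿ`, where `(x)ₙ` is the rising Pochhammer symbol. -/
noncomputable def hypTerm (a b c z : ℂ) (n : ℕ) : ℂ :=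
  (ascPochhammer ℂ n).eval a * (ascPochhammer ℂ n).eval b /
    ((ascPochhammer ℂ n).eval c * (n.factorial : ℂ)) * z ^ n

open GaussHypAux in
open Topology in
/-- Gauss's theorem: for `c` not a nonpositive integer and `Re (c-a-b) > 0`, the series
`₂F₁(a,b;c;1)` converges with sum `Γ(c)Γ(c-a-b) / (Γ(c-a)Γ(c-b))`. -/
theorem gauss_hypergeometric_at_one (a b c : ℂ)
    (hc : ∀ n : ℕ, c ≠ -(n : ℂ)) (h : 0 < (c - a - b).re) :
    HasSum (hypTerm a b c 1)
      (Complex.Gamma c * Complex.Gamma (c - a - b) /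
        (Complex.Gamma (c - a) * Complex.Gamma (c - b))) := by
  have hTeq : hypTerm a b c 1 = T a b c := by
    funext n; simp [hypTerm, T, P]
  rw [hTeq]
  have hsum := summable_T hc h
  suffices hS : ∑' n, T a b c n = Complex.Gamma c * Complex.Gamma (c - a - b) /
      (Complex.Gamma (c - a) * Complex.Gamma (c - b)) by
    rw [← hS]; exact hsum.hasSum
  have hcab : ∀ n : ℕ, c - a - b ≠ -(n : ℂ) := by
    intro n hn
    rw [hn] at h
    simp only [Complex.neg_re, Complex.natCast_re] at h
    have : (0 : ℝ) ≤ (n : ℝ) := Nat.cast_nonneg n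
    linarith
  by_cases hca : ∀ n : ℕ, c - a ≠ -(n : ℂ)
  · by_cases hcb : ∀ n : ℕ, c - b ≠ -(n : ℂ)
    · -- main case: iterate the contiguous relation and take limits
      have hstep : ∀ m : ℕ, (∑' k, T a b c k) =
          (∑' k, T a b (c + m) k) *
            ((P (c - a) m * P (c - b) m) / (P c m * P (c - a - b) m)) := by
        intro m
        have h1 := iterate_contig hc h m
        have hne : P c m * P (c - a - b) m ≠ 0 :=
          mul_ne_zero (P_ne_zero hc m) (P_ne_zero hcab m)
        rw [← mul_div_assoc, eq_div_iff hne]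
        exact h1
      have lim := (tendsto_S_one hc h).mul (tendsto_ratio_G hc hcab hca hcb)
      rw [one_mul] at lim
      have lconst : Tendsto (fun _ : ℕ => ∑' k, T a b c k) atTop
          (𝓝 (∑' k, T a b c k)) := tendsto_const_nhds
      rw [show (fun _ : ℕ => ∑' k, T a b c k) = (fun m : ℕ => (∑' k, T a b (c + m) k) *
            ((P (c - a) m * P (c - b) m) / (P c m * P (c - a - b) m))) from
        funext hstep] at lconst
      exact tendsto_nhds_unique lconst lim
    · -- Γ(c-b) = 0
      push_neg at hcb
      obtain ⟨m₀, hm₀⟩ := hcb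
      have hGz : Complex.Gamma (c - b) = 0 := (Complex.Gamma_eq_zero_iff _).2 ⟨m₀, hm₀⟩
      rw [hGz, mul_zero, div_zero]
      have h1 := iterate_contig hc h (m₀ + 1)
      have hPz : P (c - b) (m₀ + 1) = 0 := by
        rw [P_eq_prod]
        exact Finset.prod_eq_zero (Finset.mem_range.2 (Nat.lt_succ_self m₀))
          (by rw [hm₀]; ring)
      rw [hPz, mul_zero, mul_zero] at h1
      have hne : P c (m₀ + 1) * P (c - a - b) (m₀ + 1) ≠ 0 :=
        mul_ne_zero (P_ne_zero hc _) (P_ne_zero hcab _)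
      exact (mul_eq_zero.1 h1).resolve_right hne
  · -- Γ(c-a) = 0
    push_neg at hca
    obtain ⟨m₀, hm₀⟩ := hca
    have hGz : Complex.Gamma (c - a) = 0 := (Complex.Gamma_eq_zero_iff _).2 ⟨m₀, hm₀⟩
    rw [hGz, zero_mul, div_zero]
    have h1 := iterate_contig hc h (m₀ + 1)
    have hPz : P (c - a) (m₀ + 1) = 0 := by
      rw [P_eq_prod]
      exact Finset.prod_eq_zero (Finset.mem_range.2 (Nat.lt_succ_self m₀))
        (by rw [hm₀]; ring)
    rw [hPz, zero_mul, mul_zero] at h1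
    have hne : P c (m₀ + 1) * P (c - a - b) (m₀ + 1) ≠ 0 :=
      mul_ne_zero (P_ne_zero hc _) (P_ne_zero hcab _)
    exact (mul_eq_zero.1 h1).resolve_right hne
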